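/- Let s be a Hadamard matrix of order 4k (k > 1) with s_{i,1} = 1 for all i. Then for all column indices i, j, Σ_{m=1}^{4k} (N_{ij}^m)² = k², where N_{ij}^m := (1/4) Σ_{l=1}^{4k} s_{li} s_{lj} s_{lm}. -/

import Mathlib

open scoped BigOperators

/-- Let `s` be a Hadamard matrix of order `4k` (`k > 1`)
with first column all ones.  Then for all column indices `i, j`,
`∑ m, (N_{ij}^m)² = k²`, where `N_{ij}^m = (1/4) ∑ l, s l i * s l j * s l m`. -/
theorem hadamard_structure_constants_sum_sq
    (k : ℕ) (hk : 1 < k)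
    (s : Matrix (Fin (4 * k)) (Fin (4 * k)) ℤ)
    (hpm : ∀ i j, s i j = 1 ∨ s i j = -1)
    (hH : s * s.transpose = (4 * (k : ℤ)) • 1)
    (h1 : ∀ i, s i ⟨0, by omega⟩ = 1) :
    ∀ i j, (∑ m, ((∑ l, s l i * s l j * s l m) / 4) ^ 2) = (k : ℤ) ^ 2 := by
  have hrow : ∀ l l' : Fin (4*k), ∑ m, s l m * s l' m = if l = l' then 4*(k:ℤ) else 0 := by
    intro l l'
    have := congrFun (congrFun hH l) l'
    simpa [Matrix.mul_apply, Matrix.transpose_apply, Matrix.one_apply, mul_ite] using this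
  -- column orthogonality
  have hc0 : (4*(k:ℚ)) ≠ 0 := by positivity
  set S : Matrix (Fin (4*k)) (Fin (4*k)) ℚ := s.map (fun x => (x:ℚ)) with hS
  have hcast : ∀ l l' : Fin (4*k), ∑ m, (s l m : ℚ) * (s l' m : ℚ)
      = if l = l' then 4*(k:ℚ) else 0 := by
    intro l l'
    have h' : ((∑ m, s l m * s l' m : ℤ) : ℚ) = ∑ m, (s l m : ℚ) * (s l' m : ℚ) := by
      push_cast; rfl
    rw [← h', hrow l l']
    split <;> norm_num
  have hmul1 : S * ((4*(k:ℚ))⁻¹ • S.transpose) = 1 := by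
    ext l l'
    simp only [Matrix.mul_apply, Matrix.smul_apply, Matrix.transpose_apply, Matrix.map_apply,
      smul_eq_mul, Matrix.one_apply, hS]
    rw [Finset.sum_congr rfl (fun m _ => by ring : ∀ m ∈ Finset.univ,
      ((s l m : ℚ)) * ((4*(k:ℚ))⁻¹ * (s l' m : ℚ)) = (4*(k:ℚ))⁻¹ * ((s l m : ℚ) * (s l' m : ℚ))),
      ← Finset.mul_sum, hcast l l']
    split <;> field_simp <;> simp
  have hmul2 := mul_eq_one_comm.mp hmul1
  have hST : S.transpose * S = (4*(k:ℚ)) • 1 := by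
    rw [Matrix.smul_mul] at hmul2
    calc S.transpose * S = (4*(k:ℚ)) • ((4*(k:ℚ))⁻¹ • (S.transpose * S)) := by
          rw [smul_smul, mul_inv_cancel₀ hc0, one_smul]
      _ = (4*(k:ℚ)) • 1 := by rw [hmul2]
  have hcol : ∀ i j : Fin (4*k), ∑ l, s l i * s l j = if i = j then 4*(k:ℤ) else 0 := by
    intro i j
    have := congrFun (congrFun hST i) j
    simp only [Matrix.mul_apply, Matrix.smul_apply, Matrix.transpose_apply, Matrix.map_apply,
      smul_eq_mul, Matrix.one_apply, mul_ite, mul_one, mul_zero, hS] at this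
    have h' : ((∑ l, s l i * s l j : ℤ) : ℚ) = if i = j then 4*(k:ℚ) else 0 := by
      push_cast
      exact this
    split at h' <;> split <;> first | (exact_mod_cast h') | simp_all
  -- divisibility helpers
  have hdiv4 : ∀ a b : Fin (4*k), (4:ℤ) ∣ ∑ l, s l a * s l b := by
    intro a b
    rw [hcol]
    split
    · exact ⟨k, by ring⟩
    · exact dvd_zero 4
  have hdiv1 : ∀ a : Fin (4*k), (4:ℤ) ∣ ∑ l, s l a := by
    intro a
    have h := hdiv4 a ⟨0, by omega⟩
    simpa [h1] using h
  intro i j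
  have hdivD : ∀ m, (4:ℤ) ∣ ∑ l, s l i * s l j * s l m := by
    intro m
    have h8 : (8:ℤ) ∣ ∑ l, (1 + s l i) * (1 + s l j) * (1 + s l m) :=
      Finset.dvd_sum fun l _ => by
        rcases hpm l i with h|h <;> rcases hpm l j with h'|h' <;>
          rcases hpm l m with h''|h'' <;> rw [h, h', h''] <;> decide
    have hexp : ∑ l, (1 + s l i) * (1 + s l j) * (1 + s l m)
        = 4*(k:ℤ) + (∑ l, s l i) + (∑ l, s l j) + (∑ l, s l m)
          + (∑ l, s l i * s l j) + (∑ l, s l i * s l m) + (∑ l, s l j * s l m)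
          + ∑ l, s l i * s l j * s l m := by
      have hpt : ∀ l, (1 + s l i) * (1 + s l j) * (1 + s l m)
          = 1 + s l i + s l j + s l m + s l i * s l j + s l i * s l m + s l j * s l m
            + s l i * s l j * s l m := fun l => by ring
      simp_rw [hpt, Finset.sum_add_distrib, Finset.sum_const, Finset.card_univ,
        Fintype.card_fin, nsmul_eq_mul]
      push_cast
      ring
    rw [hexp] at h8
    obtain ⟨t, ht⟩ := h8
    have d1 := hdiv1 i; have d2 := hdiv1 j; have d3 := hdiv1 m
    have d4 := hdiv4 i j; have d5 := hdiv4 i m; have d6 := hdiv4 j m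
    omega
  -- key sum-of-squares computation
  have key : ∑ m, (∑ l, s l i * s l j * s l m)^2 = 16*(k:ℤ)^2 := by
    have hsq : ∀ m : Fin (4*k), (∑ l, s l i * s l j * s l m)^2
        = ∑ l, ∑ l', (s l i * s l j * (s l' i * s l' j)) * (s l m * s l' m) := by
      intro m
      rw [sq, Finset.sum_mul_sum]
      exact Finset.sum_congr rfl fun l _ => Finset.sum_congr rfl fun l' _ => by ring
    simp_rw [hsq]
    rw [Finset.sum_comm]
    have hinner : ∀ l : Fin (4*k), ∑ m, ∑ l',
        (s l i * s l j * (s l' i * s l' j)) * (s l m * s l' m)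
        = 4*(k:ℤ) * (s l i * s l j)^2 := by
      intro l
      rw [Finset.sum_comm]
      have h2 : ∀ l' : Fin (4*k), ∑ m, (s l i * s l j * (s l' i * s l' j)) * (s l m * s l' m)
          = (s l i * s l j * (s l' i * s l' j)) * ∑ m, s l m * s l' m := by
        intro l'; rw [Finset.mul_sum]
      simp_rw [h2, hrow, mul_ite, mul_zero]
      rw [Finset.sum_ite_eq Finset.univ l (fun l' => s l i * s l j * (s l' i * s l' j) * (4*(k:ℤ)))]
      simp only [Finset.mem_univ, if_pos]
      ring
    simp_rw [hinner]
    have hone : ∀ l : Fin (4*k), (s l i * s l j)^2 = 1 := fun l => by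
      rcases hpm l i with h|h <;> rcases hpm l j with h'|h' <;> rw [h, h'] <;> decide
    simp_rw [hone, mul_one, Finset.sum_const, Finset.card_univ, Fintype.card_fin,
      nsmul_eq_mul]
    push_cast
    ring
  -- conclude
  have h16 : (16:ℤ) * ∑ m, ((∑ l, s l i * s l j * s l m) / 4)^2 = 16 * (k:ℤ)^2 := by
    rw [Finset.mul_sum, ← key]
    apply Finset.sum_congr rfl
    intro m _
    obtain ⟨e, he⟩ := hdivD m
    rw [he, Int.mul_ediv_cancel_left _ (by norm_num : (4:ℤ) ≠ 0)]
    ring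
  exact mul_left_cancel₀ (by norm_num : (16:ℤ) ≠ 0) h16
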